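/- arXiv:2002.12688 — 2 statements merged into one kernel-verified Lean document; each statement's English description precedes it below -/
import Mathlib

section
/- Under the random-permutation data-partition model, the expectation over the permutation of the Frobenius norm of the conditional-expectation subgradient matrix is bounded as √M·||∂F||₂ ≤ E_π[ ||E_ξ[G]||_F ] ≤ √M·sqrt( ||∂F||₂² + σ²·(M−C)/(C(S−1)) ). -/
open Finset

noncomputable section

/-- Squared Frobenius norm of a real matrix. -/
def frobSq {n M : ℕ} (B : Matrix (Fin n) (Fin M) ℝ) : ℝ := ∑ i, ∑ j, B i j ^ 2

/-- Frobenius norm of a real matrix. -/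
def frobNorm {n M : ℕ} (B : Matrix (Fin n) (Fin M) ℝ) : ℝ := Real.sqrt (frobSq B)

/-- `ΔB := B (I - 𝟙𝟙ᵀ/M)`: subtract from every column the average of all columns. -/
def ctr {n M : ℕ} (B : Matrix (Fin n) (Fin M) ℝ) : Matrix (Fin n) (Fin M) ℝ :=
  Matrix.of fun i j => B i j - (∑ j', B i j') / M

open Classical in
/-- The valid ways to split the expanded dataset (each of the `S` points replicated `C`
times) across the `M` nodes: each point is placed at `C` distinct nodes and every node
receives exactly `L = C·S/M` points.  A uniform random permutation of the expanded dataset,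
constrained so that the `C` copies of a point go to `C` different nodes, induces the uniform
distribution on this set. -/
def allocs (S M C L : ℕ) : Finset (Fin S → Finset (Fin M)) :=
  Finset.univ.filter fun a =>
    (∀ s, (a s).card = C) ∧ ∀ j, (Finset.univ.filter fun s => j ∈ a s).card = L

open Classical in
/-- Given an allocation `a`, the ways each node `j` can draw a minibatch of size `B`
(uniformly, without replacement) from its local dataset `{s | j ∈ a s}`. -/
def batches {S M : ℕ} (a : Fin S → Finset (Fin M)) (B : ℕ) :
    Finset (Fin M → Finset (Fin S)) :=
  Finset.univ.filter fun ξ =>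
    ∀ j, ξ j ⊆ (Finset.univ.filter fun s => j ∈ a s) ∧ (ξ j).card = B

/-- The stochastic subgradient matrix: its `j`-th column is the average of the subgradients
over the minibatch `ξ j` drawn at node `j`. -/
def Gmat {n S M : ℕ} (g : Fin S → Fin n → ℝ) (B : ℕ)
    (ξ : Fin M → Finset (Fin S)) : Matrix (Fin n) (Fin M) ℝ :=
  Matrix.of fun i j => (∑ s ∈ ξ j, g s i) / B

/-- The entrywise conditional expectation `E_ξ[G]` of the stochastic subgradient matrix
given the allocation `a` (averaging uniformly over the minibatch draws). -/
def EGmat {n S M : ℕ} (g : Fin S → Fin n → ℝ) (B : ℕ)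
    (a : Fin S → Finset (Fin M)) : Matrix (Fin n) (Fin M) ℝ :=
  Matrix.of fun i j => (∑ ξ ∈ batches a B, Gmat g B ξ i j) / ((batches a B).card : ℝ)



open Classical

lemma mem_allocs {S M C L : ℕ} {a : Fin S → Finset (Fin M)} :
    a ∈ allocs S M C L ↔
      (∀ s, (a s).card = C) ∧ ∀ j, (Finset.univ.filter fun s => j ∈ a s).card = L := by
  simp [allocs]

lemma batches_eq {S M : ℕ} (a : Fin S → Finset (Fin M)) (B : ℕ) :
    batches a B
      = Fintype.piFinset fun j => ((Finset.univ.filter fun s => j ∈ a s).powersetCard B) := by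
  ext ξ
  simp [batches, Fintype.mem_piFinset, Finset.mem_powersetCard]

lemma batches_eq_aux {S M : ℕ} (a : Fin S → Finset (Fin M)) (B : ℕ)
    [∀ (ξ : Fin M → Finset (Fin S)), Decidable (∀ j, ξ j ⊆ (Finset.univ.filter fun s => j ∈ a s) ∧ (ξ j).card = B)] :
    (Finset.univ.filter fun ξ : Fin M → Finset (Fin S) =>
      ∀ j, ξ j ⊆ (Finset.univ.filter fun s => j ∈ a s) ∧ (ξ j).card = B)
      = Fintype.piFinset fun j => ((Finset.univ.filter fun s => j ∈ a s).powersetCard B) := by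
  ext ξ
  simp [Fintype.mem_piFinset, Finset.mem_powersetCard]

lemma sum_piFinset_single {S M : ℕ} (t : Fin M → Finset (Finset (Fin S))) (j : Fin M)
    (F : Finset (Fin S) → ℝ) :
    ∑ ξ ∈ Fintype.piFinset t, F (ξ j)
      = (∏ j' ∈ Finset.univ.erase j, ((t j').card : ℝ)) * ∑ b ∈ t j, F b := by
  have h := Finset.prod_univ_sum t (fun j' (x : Finset (Fin S)) => if j' = j then F x else 1)
  have hR : ∀ ξ : Fin M → Finset (Fin S), (∏ j', if j' = j then F (ξ j') else 1) = F (ξ j) := by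
    intro ξ
    rw [Finset.prod_ite_eq' Finset.univ j (fun j' => F (ξ j'))]
    simp
  have hfac : ∀ j' ∈ Finset.univ.erase j,
      (∑ x ∈ t j', if j' = j then F x else 1) = ((t j').card : ℝ) := by
    intro j' hj'
    rw [Finset.sum_congr rfl (fun x _ => if_neg (Finset.mem_erase.1 hj').1)]
    simp
  calc ∑ ξ ∈ Fintype.piFinset t, F (ξ j)
      = ∑ ξ ∈ Fintype.piFinset t, ∏ j', if j' = j then F (ξ j') else 1 :=
        Finset.sum_congr rfl (fun ξ _ => (hR ξ).symm)
    _ = ∏ j', ∑ x ∈ t j', if j' = j then F x else 1 := h.symm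
    _ = (∑ x ∈ t j, if j = j then F x else 1)
          * ∏ j' ∈ Finset.univ.erase j, ∑ x ∈ t j', if j' = j then F x else 1 :=
        (Finset.mul_prod_erase Finset.univ _ (Finset.mem_univ j)).symm
    _ = (∏ j' ∈ Finset.univ.erase j, ((t j').card : ℝ)) * ∑ b ∈ t j, F b := by
        rw [mul_comm]
        congr 1
        · exact Finset.prod_congr rfl hfac
        · simp

-- number of B-subsets of u containing a fixed s ∈ u
lemma card_powersetCard_mem {α : Type*} [DecidableEq α] (u : Finset α) (B : ℕ) (s : α)
    (hs : s ∈ u) (hB : 1 ≤ B) :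
    ((u.powersetCard B).filter fun b => s ∈ b).card = (u.card - 1).choose (B - 1) := by
  have : ((u.powersetCard B).filter fun b => s ∈ b).card
      = ((u.erase s).powersetCard (B - 1)).card := by
    apply Finset.card_bij (fun b _ => b.erase s)
    · intro b hb
      simp only [Finset.mem_filter, Finset.mem_powersetCard] at hb
      rw [Finset.mem_powersetCard]
      refine ⟨Finset.erase_subset_erase _ hb.1.1, ?_⟩
      rw [Finset.card_erase_of_mem hb.2, hb.1.2]
    · intro b1 hb1 b2 hb2 h
      simp only [Finset.mem_filter] at hb1 hb2
      rw [← Finset.insert_erase hb1.2, ← Finset.insert_erase hb2.2, h]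
    · intro c hc
      rw [Finset.mem_powersetCard] at hc
      refine ⟨insert s c, ?_, ?_⟩
      · simp only [Finset.mem_filter, Finset.mem_powersetCard]
        have hsc : s ∉ c := fun h => (Finset.mem_erase.1 (hc.1 h)).1 rfl
        refine ⟨⟨?_, ?_⟩, Finset.mem_insert_self s c⟩
        · exact Finset.insert_subset hs ((hc.1).trans (Finset.erase_subset _ _))
        · rw [Finset.card_insert_of_notMem hsc, hc.2]
          omega
      · rw [Finset.erase_insert (fun h => (Finset.mem_erase.1 (hc.1 h)).1 rfl)]
  rw [this, Finset.card_powersetCard, Finset.card_erase_of_mem hs]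

lemma sum_powersetCard_sum {α : Type*} [DecidableEq α] (u : Finset α) (B : ℕ) (hB : 1 ≤ B)
    (f : α → ℝ) :
    ∑ b ∈ u.powersetCard B, ∑ s ∈ b, f s
      = ((u.card - 1).choose (B - 1) : ℝ) * ∑ s ∈ u, f s := by
  have h1 : ∀ b ∈ u.powersetCard B, (∑ s ∈ b, f s) = ∑ s ∈ u, if s ∈ b then f s else 0 := by
    intro b hb
    rw [Finset.sum_ite_mem]
    congr 1
    exact (Finset.inter_eq_right.2 (Finset.mem_powersetCard.1 hb).1).symm
  rw [Finset.sum_congr rfl h1, Finset.sum_comm]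
  rw [Finset.mul_sum]
  apply Finset.sum_congr rfl
  intro s hs
  rw [Finset.sum_ite, Finset.sum_const_zero, add_zero, Finset.sum_const, nsmul_eq_mul,
    card_powersetCard_mem u B s hs hB]

lemma EGmat_eq {n S M C B L : ℕ} (g : Fin S → Fin n → ℝ) (a : Fin S → Finset (Fin M))
    (ha : a ∈ allocs S M C L) (hB1 : 1 ≤ B) (hBL : B ≤ L) (hL1 : 1 ≤ L) (i : Fin n) (j : Fin M) :
    EGmat g B a i j = (∑ s ∈ Finset.univ.filter fun s => j ∈ a s, g s i) / L := by
  obtain ⟨l, rfl⟩ : ∃ l, L = l + 1 := ⟨L - 1, by omega⟩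
  obtain ⟨b, rfl⟩ : ∃ b, B = b + 1 := ⟨B - 1, by omega⟩
  have hcard := (mem_allocs.1 ha).2
  set loc : Fin M → Finset (Fin S) := fun j => Finset.univ.filter fun s => j ∈ a s with hloc
  have hKnat : (b + 1) * (l + 1).choose (b + 1) = (l + 1) * l.choose b := by
    rw [mul_comm ((b:ℕ) + 1) _, Nat.add_one_mul_choose_eq l b, mul_comm]
  have hchoose_pos : 0 < (l + 1).choose (b + 1) := Nat.choose_pos hBL
  have hK_pos : 0 < l.choose b := Nat.choose_pos (by omega)
  have htj : ∀ j' : Fin M, ((loc j').powersetCard (b+1)).card = (l + 1).choose (b + 1) := by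
    intro j'
    rw [Finset.card_powersetCard, hcard j']
  have hnum : ∑ ξ ∈ batches a (b+1), Gmat g (b+1) ξ i j
      = (∏ j' ∈ Finset.univ.erase j, ((l + 1).choose (b + 1) : ℝ))
        * ((l.choose b : ℝ) * (∑ s ∈ loc j, g s i) / (b + 1)) := by
    rw [batches_eq]
    have := sum_piFinset_single (fun j' => (loc j').powersetCard (b+1)) j
      (fun bs => (∑ s ∈ bs, g s i) / (b + 1))
    simp only [Gmat, Matrix.of_apply] at this ⊢
    push_cast at this ⊢
    rw [this]
    congr 1
    · exact Finset.prod_congr rfl fun j' _ => by rw [htj j']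
    · rw [← Finset.sum_div, sum_powersetCard_sum _ _ (by omega), hcard j]
      simp [mul_div_assoc]
  have hden : ((batches a (b+1)).card : ℝ)
      = ((l + 1).choose (b + 1) : ℝ) * ∏ j' ∈ Finset.univ.erase j, ((l + 1).choose (b + 1) : ℝ) := by
    rw [batches_eq, Fintype.card_piFinset]
    push_cast
    rw [Finset.prod_congr rfl fun j' _ => by rw [htj j']]
    rw [← Finset.mul_prod_erase Finset.univ _ (Finset.mem_univ j)]
  have hP_pos : (0:ℝ) < ∏ j' ∈ Finset.univ.erase j, ((l + 1).choose (b + 1) : ℝ) :=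
    Finset.prod_pos fun _ _ => by positivity
  have hKR : ((b:ℝ) + 1) * ((l + 1).choose (b + 1) : ℝ) = ((l:ℝ) + 1) * (l.choose b : ℝ) := by
    exact_mod_cast congrArg (fun x : ℕ => (x : ℝ)) hKnat
  have hNpos : (0:ℝ) < ((l + 1).choose (b + 1) : ℝ) := by exact_mod_cast hchoose_pos
  have hPe : ∏ j' ∈ Finset.univ.erase j, ((l + 1).choose (b + 1) : ℝ)
      = ((l + 1).choose (b + 1) : ℝ) ^ (M - 1) := by
    rw [Finset.prod_const, Finset.card_erase_of_mem (Finset.mem_univ j), Finset.card_univ,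
      Fintype.card_fin]
  simp only [EGmat, Matrix.of_apply]
  rw [hnum, hden, hPe]
  push_cast
  rw [div_eq_div_iff (by positivity) (by positivity)]
  field_simp
  linear_combination (-(∑ s ∈ loc j, g s i)) * hKR

lemma sum_loc {S M C L : ℕ} (f : Fin S → ℝ) (a : Fin S → Finset (Fin M))
    (ha : a ∈ allocs S M C L) :
    ∑ j, (∑ s ∈ Finset.univ.filter fun s => j ∈ a s, f s) = C * ∑ s, f s := by
  have hC := (mem_allocs.1 ha).1
  have h1 : ∀ j : Fin M, (∑ s ∈ Finset.univ.filter fun s => j ∈ a s, f s)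
      = ∑ s, if j ∈ a s then f s else 0 := fun j => by rw [Finset.sum_filter]
  rw [Finset.sum_congr rfl fun j _ => h1 j, Finset.sum_comm, Finset.mul_sum]
  apply Finset.sum_congr rfl
  intro s _
  rw [Finset.sum_ite_mem, Finset.univ_inter, Finset.sum_const, hC s, nsmul_eq_mul]

lemma frobSq_lower {n S M C B L : ℕ} (hM : 0 < M) (hS : 2 ≤ S)
    (hL : M * L = C * S) (hB1 : 1 ≤ B) (hBL : B ≤ L) (hL1 : 1 ≤ L)
    (g : Fin S → Fin n → ℝ) (gradF : Fin n → ℝ) (hgradF : gradF = fun i => (∑ s, g s i) / S)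
    (a : Fin S → Finset (Fin M)) (ha : a ∈ allocs S M C L) :
    (M : ℝ) * ∑ i, gradF i ^ 2 ≤ frobSq (EGmat g B a) := by
  have hSpos : (0:ℝ) < S := by positivity
  have hLpos : (0:ℝ) < L := by exact_mod_cast hL1
  have hMLCS : (M:ℝ) * L = C * S := by exact_mod_cast hL
  have hcol : ∀ i, ∑ j, EGmat g B a i j = M * gradF i := by
    intro i
    rw [Finset.sum_congr rfl fun j _ => EGmat_eq g a ha hB1 hBL hL1 i j, ← Finset.sum_div,
      sum_loc (fun s => g s i) a ha, hgradF]
    field_simp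
    linear_combination (-(∑ s, g s i)) * hMLCS
  rw [frobSq, Finset.mul_sum]
  apply Finset.sum_le_sum
  intro i _
  have h2 : (∑ j, EGmat g B a i j) ^ 2 ≤ (M : ℝ) * ∑ j, (EGmat g B a i j) ^ 2 := by
    simpa using sq_sum_le_card_mul_sum_sq (s := (Finset.univ : Finset (Fin M)))
      (f := fun j => EGmat g B a i j)
  rw [hcol i] at h2
  have hMpos : (0:ℝ) < M := by exact_mod_cast hM
  nlinarith [h2]

lemma range_filter_mod_card (L M : ℕ) (hM : 0 < M) (r : ℕ) (hr : r < M) :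
    ((Finset.range (L * M)).filter fun t => t % M = r).card = L := by
  have himg : ((Finset.range (L * M)).filter fun t => t % M = r)
      = (Finset.range L).image fun i => r + i * M := by
    ext t
    simp only [Finset.mem_filter, Finset.mem_range, Finset.mem_image]
    constructor
    · rintro ⟨ht, hm⟩
      refine ⟨t / M, ?_, ?_⟩
      · exact (Nat.div_lt_iff_lt_mul hM).2 ht
      · have h0 := Nat.div_add_mod t M
        rw [mul_comm]
        omega
    · rintro ⟨i, hi, rfl⟩
      constructor
      · calc r + i * M < M + i * M := by omega
          _ = (i + 1) * M := by ring
          _ ≤ L * M := Nat.mul_le_mul_right M (by omega)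
      · rw [Nat.add_mul_mod_self_right, Nat.mod_eq_of_lt hr]
  rw [himg, Finset.card_image_of_injective _ fun i1 i2 h => by
    exact Nat.eq_of_mul_eq_mul_right hM (by omega), Finset.card_range]

lemma allocs_exists (S M C L : ℕ) (hM : 0 < M) (hC1 : 1 ≤ C) (hCM : C ≤ M)
    (hS : 1 ≤ S) (hL : M * L = C * S) :
    ∃ a : Fin S → Finset (Fin M),
      (∀ s, (a s).card = C) ∧ ∀ j, (Finset.univ.filter fun s => j ∈ a s).card = L := by
  have hSC : S * C = L * M := by rw [mul_comm S C, ← hL, mul_comm]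
  refine ⟨fun s => (Finset.range C).image fun k =>
      (⟨(s.val * C + k) % M, Nat.mod_lt _ hM⟩ : Fin M), ?_, ?_⟩
  · intro s
    rw [Finset.card_image_of_injOn, Finset.card_range]
    intro k1 h1 k2 h2 he
    simp only [Finset.coe_range, Set.mem_Iio] at h1 h2
    have hv : (s.val * C + k1) % M = (s.val * C + k2) % M := congrArg Fin.val he
    have h3 : k1 % M = k2 % M := Nat.ModEq.add_left_cancel' _ hv
    rw [Nat.mod_eq_of_lt (lt_of_lt_of_le h1 hCM), Nat.mod_eq_of_lt (lt_of_lt_of_le h2 hCM)] at h3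
    exact h3
  · intro j
    have hTj := range_filter_mod_card L M hM j.val j.isLt
    rw [← hTj]
    symm
    apply Finset.card_bij (fun t ht => (⟨t / C, by
      have h1 := (Finset.mem_filter.1 ht).1
      rw [Finset.mem_range] at h1
      exact (Nat.div_lt_iff_lt_mul hC1).2 (by omega)⟩ : Fin S))
    · intro t ht
      obtain ⟨h1, h2⟩ := Finset.mem_filter.1 ht
      rw [Finset.mem_range] at h1
      simp only [Finset.mem_filter, Finset.mem_univ, true_and, Finset.mem_image,
        Finset.mem_range]
      refine ⟨t % C, Nat.mod_lt _ hC1, ?_⟩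
      apply Fin.ext
      simp only
      have h3 : t / C * C + t % C = t := by rw [mul_comm]; exact Nat.div_add_mod t C
      rw [h3, h2]
    · intro t1 ht1 t2 ht2 he
      obtain ⟨hr1, hm1⟩ := Finset.mem_filter.1 ht1
      obtain ⟨hr2, hm2⟩ := Finset.mem_filter.1 ht2
      rw [Fin.mk.injEq] at he
      have e1' : C * (t2 / C) + t1 % C = t1 := by rw [← he]; exact Nat.div_add_mod t1 C
      have e2 : C * (t2 / C) + t2 % C = t2 := Nat.div_add_mod t2 C
      have hmm : (C * (t2 / C) + t1 % C) % M = (C * (t2 / C) + t2 % C) % M := by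
        rw [e1', e2, hm1, hm2]
      have h3 : t1 % C % M = t2 % C % M := Nat.ModEq.add_left_cancel' _ hmm
      have hc1 : t1 % C < M := lt_of_lt_of_le (Nat.mod_lt _ hC1) hCM
      have hc2 : t2 % C < M := lt_of_lt_of_le (Nat.mod_lt _ hC1) hCM
      rw [Nat.mod_eq_of_lt hc1, Nat.mod_eq_of_lt hc2] at h3
      omega
    · intro s hs
      simp only [Finset.mem_filter, Finset.mem_univ, true_and, Finset.mem_image,
        Finset.mem_range] at hs
      obtain ⟨k, hk, hke⟩ := hs
      have hkv : (s.val * C + k) % M = j.val := congrArg Fin.val hke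
      refine ⟨s.val * C + k, Finset.mem_filter.2 ⟨Finset.mem_range.2 ?_, hkv⟩, ?_⟩
      · have : s.val < S := s.isLt
        calc s.val * C + k < s.val * C + C := by omega
          _ = (s.val + 1) * C := by ring
          _ ≤ S * C := Nat.mul_le_mul_right C (by omega : s.val + 1 ≤ S)
          _ = L * M := hSC
      · apply Fin.ext
        simp only
        rw [add_comm, Nat.add_mul_div_right _ _ hC1, Nat.div_eq_of_lt hk, zero_add]

/-- indicator -/
def chi (P : Prop) : ℝ := if P then 1 else 0

lemma chi_mul_self (P : Prop) : chi P * chi P = chi P := by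
  unfold chi; split <;> simp

lemma allocs_comp_perm {S M C L : ℕ} (σ : Equiv.Perm (Fin S)) (a : Fin S → Finset (Fin M))
    (ha : a ∈ allocs S M C L) : (a ∘ σ) ∈ allocs S M C L := by
  obtain ⟨h1, h2⟩ := mem_allocs.1 ha
  refine mem_allocs.2 ⟨fun s => h1 (σ s), fun j => ?_⟩
  rw [← h2 j]
  apply Finset.card_bij (fun s _ => σ s)
  · intro s hs
    simp only [Finset.mem_filter, Finset.mem_univ, true_and] at hs ⊢
    exact hs
  · intro s1 _ s2 _ h
    exact σ.injective h
  · intro s hs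
    simp only [Finset.mem_filter, Finset.mem_univ, true_and, Function.comp] at hs ⊢
    exact ⟨σ.symm s, by simpa using hs, by simp⟩

lemma sum_allocs_perm {S M C L : ℕ} (σ : Equiv.Perm (Fin S))
    (f : (Fin S → Finset (Fin M)) → ℝ) :
    ∑ a ∈ allocs S M C L, f (a ∘ σ) = ∑ a ∈ allocs S M C L, f a := by
  apply Finset.sum_nbij' (fun a => a ∘ σ) (fun b => b ∘ ⇑σ.symm)
  · intro a ha; exact allocs_comp_perm σ a ha
  · intro b hb
    have := allocs_comp_perm σ.symm b hb
    simpa using this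
  · intro a _; funext s; simp
  · intro b _; funext s; simp
  · intro a _; rfl

lemma exists_perm_two {S : ℕ} (s t s' t' : Fin S) (hst : s ≠ t) (hst' : s' ≠ t') :
    ∃ σ : Equiv.Perm (Fin S), σ s = s' ∧ σ t = t' := by
  refine ⟨(Equiv.swap s s').trans (Equiv.swap ((Equiv.swap s s') t) t'), ?_, ?_⟩
  · have h1 : s' ≠ (Equiv.swap s s') t := by
      intro h
      have h2 : (Equiv.swap s s') s = (Equiv.swap s s') t := by
        rw [Equiv.swap_apply_left]; exact h
      exact hst ((Equiv.swap s s').injective h2)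
    rw [Equiv.trans_apply, Equiv.swap_apply_left, Equiv.swap_apply_of_ne_of_ne h1 hst']
  · rw [Equiv.trans_apply, Equiv.swap_apply_left]

lemma sum_chi_loc {S M C L : ℕ} {a : Fin S → Finset (Fin M)} (ha : a ∈ allocs S M C L)
    (j : Fin M) : ∑ s, chi (j ∈ a s) = L := by
  have h2 := (mem_allocs.1 ha).2 j
  have h4 : ∀ s : Fin S, chi (j ∈ a s) = if j ∈ a s then (1:ℝ) else 0 := by
    intro s; unfold chi; congr
  have h3 : (∑ s : Fin S, if j ∈ a s then (1:ℝ) else 0)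
      = ∑ s ∈ Finset.univ.filter (fun s => j ∈ a s), (1:ℝ) := by
    rw [Finset.sum_filter]
  rw [Finset.sum_congr rfl fun s _ => h4 s, h3, Finset.sum_const, h2, nsmul_eq_mul, mul_one]

lemma count_diag {S M C L : ℕ} (j : Fin M) (s : Fin S) :
    (S : ℝ) * (∑ a ∈ allocs S M C L, chi (j ∈ a s))
      = ((allocs S M C L).card : ℝ) * L := by
  have hconst : ∀ s' : Fin S, (∑ a ∈ allocs S M C L, chi (j ∈ a s'))
      = ∑ a ∈ allocs S M C L, chi (j ∈ a s) := by
    intro s'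
    have := sum_allocs_perm (S := S) (M := M) (C := C) (L := L) (Equiv.swap s s')
      (fun a => chi (j ∈ a s'))
    simp only [Function.comp] at this
    rw [← this]
    apply Finset.sum_congr rfl
    intro a _
    rw [Equiv.swap_apply_right]
  have : ∑ s' : Fin S, (∑ a ∈ allocs S M C L, chi (j ∈ a s'))
      = (S : ℝ) * ∑ a ∈ allocs S M C L, chi (j ∈ a s) := by
    rw [Finset.sum_congr rfl fun s' _ => hconst s', Finset.sum_const, Finset.card_univ,
      Fintype.card_fin, nsmul_eq_mul]
  rw [← this, Finset.sum_comm]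
  rw [Finset.sum_congr rfl fun a ha => sum_chi_loc ha j, Finset.sum_const, nsmul_eq_mul]

lemma count_off {S M C L : ℕ} (hS : 2 ≤ S) (j : Fin M) (s t : Fin S) (hst : s ≠ t) :
    (S : ℝ) * ((S : ℝ) - 1) * (∑ a ∈ allocs S M C L, chi (j ∈ a s) * chi (j ∈ a t))
      = ((allocs S M C L).card : ℝ) * ((L : ℝ) * (L : ℝ) - L) := by
  -- constancy over off-diagonal pairs
  have hconst : ∀ s' t' : Fin S, s' ≠ t' →
      (∑ a ∈ allocs S M C L, chi (j ∈ a s') * chi (j ∈ a t'))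
        = ∑ a ∈ allocs S M C L, chi (j ∈ a s) * chi (j ∈ a t) := by
    intro s' t' hst'
    obtain ⟨σ, hσ1, hσ2⟩ := exists_perm_two s t s' t' hst hst'
    have h := sum_allocs_perm (S := S) (M := M) (C := C) (L := L) σ
      (fun a => chi (j ∈ a s) * chi (j ∈ a t))
    simp only [Function.comp, hσ1, hσ2] at h
    exact h
  have hS0 : (S:ℝ) ≠ 0 := by
    have : (0:ℝ) < S := by exact_mod_cast (by omega : 0 < S)
    linarith
  set N := ((allocs S M C L).card : ℝ) with hN
  set c := ∑ a ∈ allocs S M C L, chi (j ∈ a s) * chi (j ∈ a t) with hc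
  have hdiag : ∀ s' : Fin S, ∑ a ∈ allocs S M C L, chi (j ∈ a s') * chi (j ∈ a s')
      = N * L / S := by
    intro s'
    rw [Finset.sum_congr rfl fun a _ => chi_mul_self _]
    have h := count_diag (C := C) (L := L) j s'
    rw [← hN] at h
    field_simp
    linarith
  have hsplit : ∀ s' : Fin S,
      ∑ t' : Fin S, ∑ a ∈ allocs S M C L, chi (j ∈ a s') * chi (j ∈ a t')
      = N * L / S + ((S:ℝ) - 1) * c := by
    intro s'
    rw [← Finset.add_sum_erase _ _ (Finset.mem_univ s')]
    congr 1
    · exact hdiag s'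
    · rw [Finset.sum_congr rfl fun t' ht' =>
        hconst s' t' (Ne.symm (Finset.mem_erase.1 ht').1)]
      rw [Finset.sum_const, Finset.card_erase_of_mem (Finset.mem_univ s'), Finset.card_univ,
        Fintype.card_fin, nsmul_eq_mul, Nat.cast_sub (by omega : 1 ≤ S), Nat.cast_one]
  have hswap : ∑ s' : Fin S, ∑ t' : Fin S,
      ∑ a ∈ allocs S M C L, chi (j ∈ a s') * chi (j ∈ a t') = N * ((L:ℝ) * L) := by
    have h1 : ∀ s' : Fin S, ∑ t' : Fin S, ∑ a ∈ allocs S M C L, chi (j ∈ a s') * chi (j ∈ a t')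
        = ∑ a ∈ allocs S M C L, ∑ t' : Fin S, chi (j ∈ a s') * chi (j ∈ a t') :=
      fun _ => Finset.sum_comm
    rw [Finset.sum_congr rfl fun s' _ => h1 s', Finset.sum_comm]
    have h2 : ∀ a ∈ allocs S M C L,
        ∑ s' : Fin S, ∑ t' : Fin S, chi (j ∈ a s') * chi (j ∈ a t') = (L : ℝ) * L := by
      intro a ha
      rw [← Finset.sum_mul_sum, sum_chi_loc ha j]
    rw [Finset.sum_congr rfl h2, Finset.sum_const, nsmul_eq_mul]
  rw [Finset.sum_congr rfl fun s' _ => hsplit s', Finset.sum_const, Finset.card_univ,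
    Fintype.card_fin, nsmul_eq_mul] at hswap
  rw [mul_add] at hswap
  have h' : (S:ℝ) * (N * ((L:ℝ) / S)) = N * L := by field_simp
  have h'' : (S:ℝ) * (N * (L:ℝ) / S) = N * L := by field_simp
  linear_combination hswap - h' - h'' + h'

lemma sum_frobSq {n S M C B L : ℕ} (hM : 0 < M) (hC1 : 1 ≤ C) (hS : 2 ≤ S)
    (hL : M * L = C * S) (hB1 : 1 ≤ B) (hBL : B ≤ L) (hL1 : 1 ≤ L)
    (g : Fin S → Fin n → ℝ) (gradF : Fin n → ℝ) (hgradF : gradF = fun i => (∑ s, g s i) / S)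
    (sigma2 : ℝ) (hsigma2 : sigma2 = ∑ i, (∑ s, (g s i - gradF i) ^ 2) / S) :
    ∑ a ∈ allocs S M C L, frobSq (EGmat g B a)
      = ((allocs S M C L).card : ℝ) * ((M:ℝ) * ((∑ i, gradF i ^ 2)
        + sigma2 * (((M : ℝ) - C) / ((C : ℝ) * ((S : ℝ) - 1))))) := by
  have hSpos : (0:ℝ) < S := by exact_mod_cast (by omega : 0 < S)
  have hS1pos : (0:ℝ) < (S:ℝ) - 1 := by
    have : (2:ℝ) ≤ S := by exact_mod_cast hS
    linarith
  have hLpos : (0:ℝ) < L := by exact_mod_cast hL1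
  have hCpos : (0:ℝ) < C := by exact_mod_cast hC1
  have hMLCS : (M:ℝ) * L = C * S := by exact_mod_cast hL
  set N := ((allocs S M C L).card : ℝ) with hN
  set D := N * L / S with hDdef
  set O := N * ((L:ℝ) * L - L) / ((S:ℝ) * ((S:ℝ) - 1)) with hOdef
  -- counting facts
  have hD : ∀ (j : Fin M) (s : Fin S), ∑ a ∈ allocs S M C L, chi (j ∈ a s) = D := by
    intro j s
    rw [hDdef, eq_div_iff (ne_of_gt hSpos)]
    linear_combination count_diag (C := C) (L := L) j s
  have hO : ∀ (j : Fin M) (s t : Fin S), s ≠ t →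
      ∑ a ∈ allocs S M C L, chi (j ∈ a s) * chi (j ∈ a t) = O := by
    intro j s t hst
    rw [hOdef, eq_div_iff (by positivity)]
    linear_combination count_off (C := C) (L := L) hS j s t hst
  -- entry formula with indicators
  have hent : ∀ a ∈ allocs S M C L, ∀ (i : Fin n) (j : Fin M),
      EGmat g B a i j = (∑ s, chi (j ∈ a s) * g s i) / L := by
    intro a ha i j
    rw [EGmat_eq g a ha hB1 hBL hL1 i j]
    congr 1
    rw [Finset.sum_filter]
    apply Finset.sum_congr rfl
    intro s _
    by_cases h : j ∈ a s <;> simp [chi, h]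
  -- key inner identity
  have hkey : ∀ (i : Fin n) (j : Fin M),
      ∑ a ∈ allocs S M C L, (∑ s, chi (j ∈ a s) * g s i) * (∑ t, chi (j ∈ a t) * g t i)
      = D * (∑ s, g s i ^ 2) + O * ((∑ s, g s i) ^ 2 - ∑ s, g s i ^ 2) := by
    intro i j
    have step1 : ∀ a : Fin S → Finset (Fin M),
        (∑ s, chi (j ∈ a s) * g s i) * (∑ t, chi (j ∈ a t) * g t i)
        = ∑ s, ∑ t, (chi (j ∈ a s) * chi (j ∈ a t)) * (g s i * g t i) := by
      intro a
      rw [Finset.sum_mul_sum]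
      apply Finset.sum_congr rfl; intro s _
      apply Finset.sum_congr rfl; intro t _
      ring
    rw [Finset.sum_congr rfl fun a _ => step1 a]
    have swap1 : ∑ a ∈ allocs S M C L, ∑ s : Fin S, ∑ t : Fin S,
        (chi (j ∈ a s) * chi (j ∈ a t)) * (g s i * g t i)
        = ∑ s : Fin S, ∑ t : Fin S,
            (∑ a ∈ allocs S M C L, chi (j ∈ a s) * chi (j ∈ a t)) * (g s i * g t i) := by
      rw [Finset.sum_comm]
      apply Finset.sum_congr rfl; intro s _
      rw [Finset.sum_comm]
      apply Finset.sum_congr rfl; intro t _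
      rw [Finset.sum_mul]
    rw [swap1]
    have inner : ∀ s : Fin S,
        ∑ t : Fin S, (∑ a ∈ allocs S M C L, chi (j ∈ a s) * chi (j ∈ a t)) * (g s i * g t i)
        = D * g s i ^ 2 + O * (g s i * (∑ t, g t i) - g s i ^ 2) := by
      intro s
      rw [← Finset.add_sum_erase _ _ (Finset.mem_univ s)]
      have hdd : (∑ a ∈ allocs S M C L, chi (j ∈ a s) * chi (j ∈ a s)) * (g s i * g s i)
          = D * g s i ^ 2 := by
        rw [Finset.sum_congr rfl fun a _ => chi_mul_self _, hD j s]
        ring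
      rw [hdd]
      congr 1
      rw [Finset.sum_congr rfl fun t ht =>
        by rw [hO j s t (Ne.symm (Finset.mem_erase.1 ht).1)]]
      rw [← Finset.mul_sum]
      congr 1
      rw [← Finset.mul_sum, Finset.sum_erase_eq_sub (Finset.mem_univ s)]
      ring
    rw [Finset.sum_congr rfl fun s _ => inner s, Finset.sum_add_distrib,
      ← Finset.mul_sum, ← Finset.mul_sum]
    congr 1
    rw [Finset.sum_sub_distrib, ← Finset.sum_mul, ← sq]
  -- totals
  have hSg : ∀ i, ∑ s, g s i = (S:ℝ) * gradF i := by
    intro i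
    rw [hgradF]
    field_simp
  have hA : ∑ i, ∑ s, g s i ^ 2 = (S:ℝ) * (sigma2 + ∑ i, gradF i ^ 2) := by
    have hi : ∀ i, ∑ s, (g s i - gradF i) ^ 2 = (∑ s, g s i ^ 2) - S * gradF i ^ 2 := by
      intro i
      have : ∀ s, (g s i - gradF i) ^ 2 = g s i ^ 2 - 2 * gradF i * g s i + gradF i ^ 2 := by
        intro s; ring
      rw [Finset.sum_congr rfl fun s _ => this s, Finset.sum_add_distrib,
        Finset.sum_sub_distrib, ← Finset.mul_sum, hSg i, Finset.sum_const,
        Finset.card_univ, Fintype.card_fin, nsmul_eq_mul]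
      ring
    rw [hsigma2, ← Finset.sum_div,
      Finset.sum_congr rfl fun i (_ : i ∈ Finset.univ) => hi i,
      Finset.sum_sub_distrib, ← Finset.mul_sum]
    field_simp
    ring
  -- assemble
  have hfs : ∀ a ∈ allocs S M C L, frobSq (EGmat g B a)
      = ∑ i, ∑ j, ((∑ s, chi (j ∈ a s) * g s i) * (∑ t, chi (j ∈ a t) * g t i)) / ((L:ℝ)^2) := by
    intro a ha
    unfold frobSq
    apply Finset.sum_congr rfl; intro i _
    apply Finset.sum_congr rfl; intro j _
    rw [hent a ha i j]
    field_simp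
  rw [Finset.sum_congr rfl hfs]
  have swapA : ∑ a ∈ allocs S M C L, ∑ i : Fin n, ∑ j : Fin M,
      ((∑ s, chi (j ∈ a s) * g s i) * (∑ t, chi (j ∈ a t) * g t i)) / ((L:ℝ)^2)
      = ∑ i : Fin n, ∑ j : Fin M,
        (∑ a ∈ allocs S M C L, (∑ s, chi (j ∈ a s) * g s i) * (∑ t, chi (j ∈ a t) * g t i))
          / ((L:ℝ)^2) := by
    rw [Finset.sum_comm]
    apply Finset.sum_congr rfl; intro i _
    rw [Finset.sum_comm]
    apply Finset.sum_congr rfl; intro j _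
    rw [Finset.sum_div]
  rw [swapA]
  rw [Finset.sum_congr rfl fun i _ => Finset.sum_congr rfl fun j _ => by rw [hkey i j]]
  -- now a pure sum over i and j of constants in j
  have hMC : (((M : ℝ) - C) / ((C : ℝ) * ((S : ℝ) - 1))) = ((S:ℝ) - L) / ((L:ℝ) * ((S:ℝ) - 1)) := by
    rw [div_eq_div_iff (by positivity) (by positivity)]
    linear_combination ((S:ℝ) - 1) * hMLCS
  rw [hMC]
  rw [Finset.sum_congr rfl fun i _ => Finset.sum_const (b := (D * (∑ s, g s i ^ 2)
      + O * ((∑ s, g s i) ^ 2 - ∑ s, g s i ^ 2)) / ((L:ℝ)^2))]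
  simp only [Finset.card_univ, Fintype.card_fin, nsmul_eq_mul]
  rw [← Finset.mul_sum]
  have expand : ∑ i : Fin n, (D * (∑ s, g s i ^ 2) + O * ((∑ s, g s i) ^ 2 - ∑ s, g s i ^ 2))
        / ((L:ℝ)^2)
      = (D * (∑ i, ∑ s, g s i ^ 2) + O * ((S:ℝ)^2 * (∑ i, gradF i ^ 2)
          - ∑ i, ∑ s, g s i ^ 2)) / ((L:ℝ)^2) := by
    rw [← Finset.sum_div]
    congr 1
    rw [Finset.sum_add_distrib, ← Finset.mul_sum, ← Finset.mul_sum, Finset.sum_sub_distrib]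
    have h5 : ∑ i : Fin n, (∑ s, g s i) ^ 2 = (S:ℝ)^2 * ∑ i, gradF i ^ 2 := by
      rw [Finset.mul_sum]
      apply Finset.sum_congr rfl
      intro i _
      rw [hSg i]; ring
    rw [h5]
  rw [expand, hA, hDdef, hOdef]
  field_simp
  ring
/-- **Proposition 2, third claim.** Under the random-permutation data-partition model,
`√M ‖∂F‖₂ ≤ E_π[‖E_ξ[G]‖_F] ≤ √M √(‖∂F‖₂² + σ² (M-C)/(C(S-1)))`. -/
theorem statement5
    -- dataset of `S` points, `M` nodes, replication factor `C`, local dataset size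
    -- `L = C·S/M`, and minibatch size `B`
    (n S M C B L : ℕ) (hM : 0 < M) (hC1 : 1 ≤ C) (hCM : C ≤ M) (hS : 2 ≤ S)
    (hL : M * L = C * S) (hB1 : 1 ≤ B) (hBL : B ≤ L)
    -- the subgradients of the loss at the fixed parameter vector `w`, at each data point
    (g : Fin S → Fin n → ℝ)
    -- the full-dataset average subgradient `∂F` and the total variance `σ²`
    (gradF : Fin n → ℝ) (hgradF : gradF = fun i => (∑ s, g s i) / S)
    (sigma2 : ℝ) (hsigma2 : sigma2 = ∑ i, (∑ s, (g s i - gradF i) ^ 2) / S)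
 :
    Real.sqrt M * Real.sqrt (∑ i, gradF i ^ 2) ≤
      (∑ a ∈ allocs S M C L, frobNorm (EGmat g B a)) / ((allocs S M C L).card : ℝ) ∧
    (∑ a ∈ allocs S M C L, frobNorm (EGmat g B a)) / ((allocs S M C L).card : ℝ) ≤
      Real.sqrt M * Real.sqrt ((∑ i, gradF i ^ 2)
        + sigma2 * (((M : ℝ) - C) / ((C : ℝ) * ((S : ℝ) - 1)))) := by
  have hL1 : 1 ≤ L := le_trans hB1 hBL
  have hne : (allocs S M C L).Nonempty := by
    obtain ⟨a, h1, h2⟩ := allocs_exists S M C L hM hC1 hCM (by omega) hL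
    exact ⟨a, mem_allocs.2 ⟨h1, h2⟩⟩
  have hNpos : (0:ℝ) < ((allocs S M C L).card : ℝ) := by
    exact_mod_cast Finset.card_pos.2 hne
  set N := ((allocs S M C L).card : ℝ) with hNdef
  constructor
  · rw [le_div_iff₀ hNpos]
    have each : ∀ a ∈ allocs S M C L,
        Real.sqrt M * Real.sqrt (∑ i, gradF i ^ 2) ≤ frobNorm (EGmat g B a) := by
      intro a ha
      unfold frobNorm
      rw [← Real.sqrt_mul (by positivity : (0:ℝ) ≤ (M:ℝ))]
      exact Real.sqrt_le_sqrt (frobSq_lower hM hS hL hB1 hBL hL1 g gradF hgradF a ha)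
    calc Real.sqrt M * Real.sqrt (∑ i, gradF i ^ 2) * N
        = ∑ _a ∈ allocs S M C L, Real.sqrt M * Real.sqrt (∑ i, gradF i ^ 2) := by
          rw [Finset.sum_const, nsmul_eq_mul]; ring
      _ ≤ ∑ a ∈ allocs S M C L, frobNorm (EGmat g B a) := Finset.sum_le_sum each
  · rw [div_le_iff₀ hNpos]
    set T := (∑ i, gradF i ^ 2) + sigma2 * (((M : ℝ) - C) / ((C : ℝ) * ((S : ℝ) - 1))) with hT
    have hsum := sum_frobSq hM hC1 hS hL hB1 hBL hL1 g gradF hgradF sigma2 hsigma2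
    rw [← hNdef, ← hT] at hsum
    have hfsnn : ∀ a : Fin S → Finset (Fin M), 0 ≤ frobSq (EGmat g B a) := by
      intro a
      unfold frobSq
      positivity
    have hfns : ∀ a : Fin S → Finset (Fin M),
        frobNorm (EGmat g B a) ^ 2 = frobSq (EGmat g B a) := fun a =>
      Real.sq_sqrt (hfsnn a)
    have hMT : 0 ≤ (M:ℝ) * T := by
      have h1 : 0 ≤ ∑ a ∈ allocs S M C L, frobSq (EGmat g B a) :=
        Finset.sum_nonneg fun a _ => hfsnn a
      rw [hsum] at h1
      nlinarith
    have hcs : (∑ a ∈ allocs S M C L, frobNorm (EGmat g B a)) ^ 2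
        ≤ N ^ 2 * ((M:ℝ) * T) := by
      have h2 := sq_sum_le_card_mul_sum_sq (s := allocs S M C L)
        (f := fun a => frobNorm (EGmat g B a))
      rw [Finset.sum_congr rfl fun a _ => hfns a, hsum] at h2
      calc (∑ a ∈ allocs S M C L, frobNorm (EGmat g B a)) ^ 2
          ≤ N * (N * ((M:ℝ) * T)) := h2
        _ = N ^ 2 * ((M:ℝ) * T) := by ring
    have hnn : 0 ≤ ∑ a ∈ allocs S M C L, frobNorm (EGmat g B a) :=
      Finset.sum_nonneg fun a _ => Real.sqrt_nonneg _
    have hle : ∑ a ∈ allocs S M C L, frobNorm (EGmat g B a)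
        ≤ Real.sqrt (N ^ 2 * ((M:ℝ) * T)) := Real.le_sqrt_of_sq_le hcs
    calc ∑ a ∈ allocs S M C L, frobNorm (EGmat g B a)
        ≤ Real.sqrt (N ^ 2 * ((M:ℝ) * T)) := hle
      _ = Real.sqrt M * Real.sqrt T * N := by
          rw [Real.sqrt_mul (by positivity), Real.sqrt_sq hNpos.le,
            Real.sqrt_mul (by positivity : (0:ℝ) ≤ (M:ℝ))]
          ring

end
end

section
/- Under the hypotheses of Corollary c:max_dist with constant learning rate η > 0, the time average of the expected consensus error satisfies, for every K ≥ 1: (1/K)·Σ_{k=0}^{K−1} E_ξ[ ||ΔW(k)||_F ] ≤ (√M·√R_sp/K)·(1−|λ2|^K)/(1−|λ2|) + η√E_sp·(1−α)·(K−1)/K + (η√E_sp·α/(1−|λ2|))·( 1 − (1/K)·(1−|λ2|^K)/(1−|λ2|) ). -/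
open MeasureTheory Matrix Finset

noncomputable section

/-- Squared Frobenius norm of a complex matrix. -/
def frobSqC {n M : ℕ} (B : Matrix (Fin n) (Fin M) ℂ) : ℝ := ∑ i, ∑ j, ‖B i j‖ ^ 2

/-- The `j`-th column of a matrix, viewed as a vector of `EuclideanSpace ℝ (Fin n)`. -/
def col {n M : ℕ} (B : Matrix (Fin n) (Fin M) ℝ) (j : Fin M) : EuclideanSpace ℝ (Fin n) :=
  WithLp.toLp 2 (fun i => B i j)

/-- The average of the columns of `B` (the average model `w̄`). -/
def colAvg {n M : ℕ} (B : Matrix (Fin n) (Fin M) ℝ) : EuclideanSpace ℝ (Fin n) :=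
  WithLp.toLp 2 (fun i => (∑ j, B i j) / M)

/-- Time average of a sequence of vectors over iterations `0, …, K-1`. -/
def timeAvg {n : ℕ} (K : ℕ) (v : ℕ → EuclideanSpace ℝ (Fin n)) : EuclideanSpace ℝ (Fin n) :=
  WithLp.toLp 2 (fun i => (∑ k ∈ Finset.range K, v k i) / K)

/-- `g` is a subgradient of `f` at `x`. -/
def IsSubgradAt {n : ℕ} (f : EuclideanSpace ℝ (Fin n) → ℝ)
    (g x : EuclideanSpace ℝ (Fin n)) : Prop :=
  ∀ y, f x + (inner ℝ g (y - x) : ℝ) ≤ f y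

section Aux

variable {n M Q : ℕ}


/-- complexification of a real matrix -/
def Cof {k l : ℕ} (B : Matrix (Fin k) (Fin l) ℝ) : Matrix (Fin k) (Fin l) ℂ :=
  B.map (fun x => (x : ℂ))

lemma Cof_mul {k l m : ℕ} (B : Matrix (Fin k) (Fin l) ℝ) (C : Matrix (Fin l) (Fin m) ℝ) :
    Cof (B * C) = Cof B * Cof C := by
  ext i j
  simp [Cof, Matrix.mul_apply]

lemma Cof_pow (A : Matrix (Fin M) (Fin M) ℝ) (m : ℕ) : Cof (A ^ m) = Cof A ^ m := by
  induction m with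
  | zero => ext i j; simp [Cof, Matrix.one_apply, apply_ite]
  | succ m ih => rw [pow_succ, pow_succ, Cof_mul, ih]

lemma frobSq_eq_Cof (B : Matrix (Fin n) (Fin M) ℝ) : frobSq B = frobSqC (Cof B) := by
  unfold frobSq frobSqC Cof
  refine Finset.sum_congr rfl fun i _ => Finset.sum_congr rfl fun j _ => ?_
  simp [sq_abs]

/-- Frobenius inner product via trace -/
def fip (B C : Matrix (Fin n) (Fin M) ℂ) : ℂ := ((Bᴴ * C)).trace

lemma fip_self_re (B : Matrix (Fin n) (Fin M) ℂ) : (fip B B).re = frobSqC B := by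
  simp only [fip, Matrix.trace, Matrix.diag_apply, Matrix.mul_apply,
    Matrix.conjTranspose_apply, frobSqC]
  rw [Complex.re_sum, Finset.sum_comm]
  refine Finset.sum_congr rfl fun i _ => ?_
  rw [Complex.re_sum]
  refine Finset.sum_congr rfl fun j _ => ?_
  rw [show star (B j i) = (starRingEnd ℂ) (B j i) from rfl, Complex.conj_mul']
  rw [← Complex.ofReal_pow, Complex.ofReal_re]

lemma frobSqC_nonneg (B : Matrix (Fin n) (Fin M) ℂ) : 0 ≤ frobSqC B :=
  Finset.sum_nonneg fun _ _ => Finset.sum_nonneg fun _ _ => sq_nonneg _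

lemma frobSq_nonneg (B : Matrix (Fin n) (Fin M) ℝ) : 0 ≤ frobSq B :=
  Finset.sum_nonneg fun _ _ => Finset.sum_nonneg fun _ _ => sq_nonneg _

/-- Pythagoras for pairwise `fip`-orthogonal families. -/
lemma pyth {ι : Type*} (s : Finset ι) (c : ι → ℂ) (C : ι → Matrix (Fin n) (Fin M) ℂ)
    (horth : ∀ i ∈ s, ∀ j ∈ s, i ≠ j → fip (C i) (C j) = 0) :
    frobSqC (∑ i ∈ s, c i • C i) = ∑ i ∈ s, ‖c i‖ ^ 2 * frobSqC (C i) := by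
  have key : fip (∑ i ∈ s, c i • C i) (∑ i ∈ s, c i • C i)
      = ∑ i ∈ s, ((‖c i‖ ^ 2 : ℝ) : ℂ) * fip (C i) (C i) := by
    unfold fip
    rw [Matrix.conjTranspose_sum]
    simp_rw [Matrix.conjTranspose_smul]
    simp_rw [Matrix.sum_mul, Matrix.mul_sum]
    simp_rw [Matrix.smul_mul, Matrix.mul_smul, Matrix.trace_sum, Matrix.trace_smul]
    refine Finset.sum_congr rfl fun i hi => ?_
    rw [Finset.sum_eq_single_of_mem i hi]
    · rw [smul_smul]
      have h2 : star (c i) * c i = ((‖c i‖ ^ 2 : ℝ) : ℂ) := by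
        rw [show star (c i) = (starRingEnd ℂ) (c i) from rfl, Complex.conj_mul']
        push_cast; ring
      rw [h2, smul_eq_mul]
    · intro j hj hne
      have := horth i hi j hj (Ne.symm hne)
      unfold fip at this
      rw [this, smul_zero, smul_zero]
  have := congrArg Complex.re key
  rw [fip_self_re] at this
  rw [this, Complex.re_sum]
  refine Finset.sum_congr rfl fun i _ => ?_
  rw [Complex.re_ofReal_mul, fip_self_re]


section Spectral

variable (lam : Fin Q → ℂ) (P : Fin Q → Matrix (Fin M) (Fin M) ℂ)

lemma fip_BP (hherm : ∀ q, (P q)ᴴ = P q) (horth : ∀ q q', q ≠ q' → P q * P q' = 0)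
    (B : Matrix (Fin n) (Fin M) ℂ) (q q' : Fin Q) (hne : q ≠ q') :
    fip (B * P q) (B * P q') = 0 := by
  unfold fip
  rw [Matrix.conjTranspose_mul, hherm q, Matrix.trace_mul_comm, Matrix.mul_assoc,
    ← Matrix.mul_assoc (P q') (P q) Bᴴ, horth q' q (Ne.symm hne), Matrix.zero_mul,
    Matrix.mul_zero, Matrix.trace_zero]

lemma Apow (A : Matrix (Fin M) (Fin M) ℝ)
    (hdecomp : A.map (fun x => (x : ℂ)) = ∑ q, lam q • P q)
    (hidem : ∀ q, P q * P q = P q) (horth : ∀ q q', q ≠ q' → P q * P q' = 0)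
    (hPsum : ∑ q, P q = 1) (m : ℕ) :
    (Cof A) ^ m = ∑ q, (lam q) ^ m • P q := by
  induction m with
  | zero => simp [hPsum]
  | succ m ih =>
    rw [pow_succ, ih, show Cof A = A.map (fun x => (x : ℂ)) from rfl, hdecomp]
    simp_rw [Matrix.sum_mul, Matrix.mul_sum, Matrix.smul_mul, Matrix.mul_smul]
    refine Finset.sum_congr rfl fun q _ => ?_
    rw [Finset.sum_eq_single_of_mem q (Finset.mem_univ q)]
    · rw [hidem q, smul_smul, ← pow_succ]
    · intro q' _ hne
      rw [horth q q' (Ne.symm hne), smul_zero, smul_zero]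

lemma BPzero (hQ : 1 < Q)
    (hP1 : ∀ q : Fin Q, (q : ℕ) = 0 → P q = Matrix.of fun _ _ => (M : ℂ)⁻¹)
    (B : Matrix (Fin n) (Fin M) ℝ) (hB : ∀ i, ∑ j, B i j = 0)
    (q : Fin Q) (hq : (q : ℕ) = 0) : Cof B * P q = 0 := by
  rw [hP1 q hq]
  ext i j
  simp only [Matrix.mul_apply, Cof, Matrix.map_apply, Matrix.of_apply, Matrix.zero_apply]
  rw [← Finset.sum_mul, ← Complex.ofReal_sum, hB i]
  simp

lemma decompB (A : Matrix (Fin M) (Fin M) ℝ) (hQ : 1 < Q)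
    (hdecomp : A.map (fun x => (x : ℂ)) = ∑ q, lam q • P q)
    (hidem : ∀ q, P q * P q = P q) (horth : ∀ q q', q ≠ q' → P q * P q' = 0)
    (hPsum : ∑ q, P q = 1)
    (hP1 : ∀ q : Fin Q, (q : ℕ) = 0 → P q = Matrix.of fun _ _ => (M : ℂ)⁻¹)
    (B : Matrix (Fin n) (Fin M) ℝ) (hB : ∀ i, ∑ j, B i j = 0) (m : ℕ) :
    Cof (B * A ^ m) = ∑ q ∈ Finset.univ.filter (fun q : Fin Q => (q : ℕ) ≠ 0),
      (lam q) ^ m • (Cof B * P q) := by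
  rw [Cof_mul, Cof_pow, Apow lam P A hdecomp hidem horth hPsum]
  rw [Matrix.mul_sum]
  simp_rw [Matrix.mul_smul]
  rw [← Finset.sum_filter_add_sum_filter_not Finset.univ (fun q : Fin Q => (q : ℕ) ≠ 0)]
  have hz : ∑ q ∈ Finset.univ.filter (fun q : Fin Q => ¬ (q : ℕ) ≠ 0),
      (lam q) ^ m • (Cof B * P q) = 0 :=
    Finset.sum_eq_zero (fun q hq => by
      rw [Finset.mem_filter, not_ne_iff] at hq
      rw [BPzero P hQ hP1 B hB q hq.2, smul_zero])
  rw [hz, add_zero]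

lemma specEq (A : Matrix (Fin M) (Fin M) ℝ) (hQ : 1 < Q)
    (hdecomp : A.map (fun x => (x : ℂ)) = ∑ q, lam q • P q)
    (hherm : ∀ q, (P q)ᴴ = P q)
    (hidem : ∀ q, P q * P q = P q) (horth : ∀ q q', q ≠ q' → P q * P q' = 0)
    (hPsum : ∑ q, P q = 1)
    (hP1 : ∀ q : Fin Q, (q : ℕ) = 0 → P q = Matrix.of fun _ _ => (M : ℂ)⁻¹)
    (B : Matrix (Fin n) (Fin M) ℝ) (hB : ∀ i, ∑ j, B i j = 0) (m : ℕ) :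
    frobSq (B * A ^ m) = ∑ q ∈ Finset.univ.filter (fun q : Fin Q => (q : ℕ) ≠ 0),
      (‖lam q‖ ^ m) ^ 2 * frobSqC (Cof B * P q) := by
  rw [frobSq_eq_Cof, decompB lam P A hQ hdecomp hidem horth hPsum hP1 B hB m,
    pyth _ _ _ (fun q _ q' _ hne => fip_BP P hherm horth (Cof B) q q' hne)]
  simp [norm_pow]

lemma sumP (A : Matrix (Fin M) (Fin M) ℝ) (hQ : 1 < Q)
    (hdecomp : A.map (fun x => (x : ℂ)) = ∑ q, lam q • P q)
    (hherm : ∀ q, (P q)ᴴ = P q)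
    (hidem : ∀ q, P q * P q = P q) (horth : ∀ q q', q ≠ q' → P q * P q' = 0)
    (hPsum : ∑ q, P q = 1)
    (hP1 : ∀ q : Fin Q, (q : ℕ) = 0 → P q = Matrix.of fun _ _ => (M : ℂ)⁻¹)
    (B : Matrix (Fin n) (Fin M) ℝ) (hB : ∀ i, ∑ j, B i j = 0) :
    frobSq B = ∑ q ∈ Finset.univ.filter (fun q : Fin Q => (q : ℕ) ≠ 0),
      frobSqC (Cof B * P q) := by
  have := specEq lam P A hQ hdecomp hherm hidem horth hPsum hP1 B hB 0
  simpa using this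

end Spectral


section CtrNorm

lemma ctr_rowsum (hM : 0 < M) (B : Matrix (Fin n) (Fin M) ℝ) (i : Fin n) :
    ∑ j, ctr B i j = 0 := by
  simp only [ctr, Matrix.of_apply, Finset.sum_sub_distrib, Finset.sum_const,
    Finset.card_univ, Fintype.card_fin, nsmul_eq_mul]
  field_simp
  ring

lemma ctr_mul (A : Matrix (Fin M) (Fin M) ℝ)
    (hrows : ∀ i, ∑ j, A i j = 1) (hcols : ∀ j, ∑ i, A i j = 1)
    (B : Matrix (Fin n) (Fin M) ℝ) : ctr (B * A) = ctr B * A := by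
  ext i j
  simp only [ctr, Matrix.of_apply, Matrix.mul_apply]
  have h1 : ∑ j', ∑ k, B i k * A k j' = ∑ k, B i k := by
    rw [Finset.sum_comm]
    refine Finset.sum_congr rfl fun k _ => ?_
    rw [← Finset.mul_sum, hrows k, mul_one]
  have h2 : ∑ k, (B i k - (∑ j', B i j') / M) * A k j
      = (∑ k, B i k * A k j) - (∑ j', B i j') / M := by
    simp_rw [sub_mul]
    rw [Finset.sum_sub_distrib, ← Finset.mul_sum, hcols j, mul_one]
  rw [h1, h2]

lemma ctr_sub_smul (B C : Matrix (Fin n) (Fin M) ℝ) (c : ℝ) :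
    ctr (B - c • C) = ctr B - c • ctr C := by
  ext i j
  simp only [ctr, Matrix.of_apply, Matrix.sub_apply, Matrix.smul_apply, smul_eq_mul,
    Finset.sum_sub_distrib, ← Finset.mul_sum]
  ring

/-- matrix as a Euclidean vector -/
def emb (B : Matrix (Fin n) (Fin M) ℝ) : EuclideanSpace ℝ (Fin n × Fin M) :=
  WithLp.toLp 2 (fun p : Fin n × Fin M => B p.1 p.2)

lemma frobNorm_eq_emb (B : Matrix (Fin n) (Fin M) ℝ) : frobNorm B = ‖emb B‖ := by
  rw [EuclideanSpace.norm_eq, frobNorm, frobSq]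
  congr 1
  rw [Fintype.sum_prod_type]
  exact Finset.sum_congr rfl fun i _ => Finset.sum_congr rfl fun j _ => by
    simp [emb, Real.norm_eq_abs, sq_abs]

lemma emb_sub (B C : Matrix (Fin n) (Fin M) ℝ) : emb (B - C) = emb B - emb C := by
  ext p; simp [emb]

lemma emb_smul (c : ℝ) (B : Matrix (Fin n) (Fin M) ℝ) : emb (c • B) = c • emb B := by
  ext p; simp [emb]

lemma emb_sum {ι : Type*} (s : Finset ι) (F : ι → Matrix (Fin n) (Fin M) ℝ) :
    emb (∑ i ∈ s, F i) = ∑ i ∈ s, emb (F i) := by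
  ext p
  simp [emb, Matrix.sum_apply]

lemma frobNorm_nonneg (B : Matrix (Fin n) (Fin M) ℝ) : 0 ≤ frobNorm B := Real.sqrt_nonneg _

lemma frobNorm_sub_sum_le {ι : Type*} (X : Matrix (Fin n) (Fin M) ℝ) (c : ℝ) (hc : 0 ≤ c)
    (s : Finset ι) (F : ι → Matrix (Fin n) (Fin M) ℝ) :
    frobNorm (X - c • ∑ i ∈ s, F i) ≤ frobNorm X + c * ∑ i ∈ s, frobNorm (F i) := by
  rw [frobNorm_eq_emb, emb_sub, emb_smul, emb_sum]
  calc ‖emb X - c • ∑ i ∈ s, emb (F i)‖ ≤ ‖emb X‖ + ‖c • ∑ i ∈ s, emb (F i)‖ :=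
        norm_sub_le _ _
    _ ≤ ‖emb X‖ + c * ∑ i ∈ s, ‖emb (F i)‖ := by
        rw [norm_smul, Real.norm_eq_abs, abs_of_nonneg hc]
        gcongr
        exact norm_sum_le _ _
    _ = frobNorm X + c * ∑ i ∈ s, frobNorm (F i) := by
        rw [← frobNorm_eq_emb]
        congr 1
        rw [Finset.sum_congr rfl fun i _ => (frobNorm_eq_emb (F i)).symm]

lemma frobNorm_le_sqrt {B : Matrix (Fin n) (Fin M) ℝ} {t : ℝ} (h : frobSq B ≤ t) :
    frobNorm B ≤ Real.sqrt t := Real.sqrt_le_sqrt h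

end CtrNorm

/-- Jensen for sqrt on a probability space. -/
lemma jensen_sqrt {Ω : Type*} [MeasurableSpace Ω] (μ : Measure Ω) [IsProbabilityMeasure μ]
    (f : Ω → ℝ) (hf0 : ∀ ω, 0 ≤ f ω) (hf : Integrable f μ)
    (hfs : Integrable (fun ω => Real.sqrt (f ω)) μ) :
    ∫ ω, Real.sqrt (f ω) ∂μ ≤ Real.sqrt (∫ ω, f ω ∂μ) := by
  set I := ∫ ω, f ω ∂μ with hI
  have hI0 : 0 ≤ I := integral_nonneg hf0
  refine le_of_forall_sub_le fun ε hε => ?_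
  rw [sub_le_iff_le_add]
  set c := Real.sqrt I + ε with hc
  have hc0 : 0 < c := by positivity
  have hpt : ∀ ω, Real.sqrt (f ω) ≤ (f ω / c + c) / 2 := by
    intro ω
    have h2 := Real.sq_sqrt (hf0 ω)
    have h4 := sq_nonneg (Real.sqrt (f ω) - c)
    have hkey : Real.sqrt (f ω) * (2 * c) ≤ f ω + c * c := by nlinarith
    have h2c : (0:ℝ) < 2 * c := by positivity
    calc Real.sqrt (f ω) = Real.sqrt (f ω) * (2 * c) / (2 * c) := by field_simp
      _ ≤ (f ω + c * c) / (2 * c) := by gcongr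
      _ = (f ω / c + c) / 2 := by rw [div_add' _ _ _ (ne_of_gt hc0), div_div]; ring_nf
  have hint : Integrable (fun ω => (f ω / c + c) / 2) μ :=
    (((hf.div_const c).add (integrable_const c)).div_const 2)
  calc ∫ ω, Real.sqrt (f ω) ∂μ ≤ ∫ ω, (f ω / c + c) / 2 ∂μ :=
        integral_mono hfs hint hpt
    _ = (I / c + c) / 2 := by
        rw [integral_div, integral_add (hf.div_const c) (integrable_const c),
          integral_div, integral_const]
        simp
        rfl
    _ ≤ Real.sqrt I + ε := by
        have h5 := Real.sq_sqrt hI0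
        have h6 : I ≤ c ^ 2 := by nlinarith [Real.sqrt_nonneg I]
        rw [div_le_iff₀ (by norm_num : (0:ℝ) < 2)]
        rw [div_add' _ _ _ (ne_of_gt hc0), div_le_iff₀ hc0]
        nlinarith


end Aux

set_option maxHeartbeats 2000000 in
/-- **Time-averaged consensus error.** Under the hypotheses of Corollary 2 with a constant
learning rate `η > 0`, the time average of the expected consensus error satisfies, for every
`K ≥ 1`, the stated bound. -/
theorem statement13
    (n M Q : ℕ) (hM : 0 < M) (hQ : 1 < Q)
    -- the consensus matrix: nonnegative, doubly stochastic (A4), normal (A4),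
    -- irreducible (strongly connected graph, A3) and primitive (positive diagonal)
    (A : Matrix (Fin M) (Fin M) ℝ)
    (hnonneg : ∀ i j, 0 ≤ A i j)
    (hrows : ∀ i, ∑ j, A i j = 1)
    (hcols : ∀ j, ∑ i, A i j = 1)
    (hnormal : Aᵀ * A = A * Aᵀ)
    (hirr : ∀ i j, ∃ k : ℕ, 0 < (A ^ k) i j)
    (hdiag : ∀ i, 0 < A i i)
    -- spectral decomposition of `A` into orthogonal projectors onto its `Q` distinct
    -- eigenspaces, with eigenvalues ordered by decreasing modulus, `λ₁ = 1 > |λ₂|`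
    (lam : Fin Q → ℂ) (P : Fin Q → Matrix (Fin M) (Fin M) ℂ)
    (hdecomp : A.map (fun x => (x : ℂ)) = ∑ q, lam q • P q)
    (hinj : Function.Injective lam)
    (hherm : ∀ q, (P q)ᴴ = P q)
    (hidem : ∀ q, P q * P q = P q)
    (horth : ∀ q q', q ≠ q' → P q * P q' = 0)
    (hPsum : ∑ q, P q = 1)
    (hord : ∀ q q' : Fin Q, q ≤ q' → ‖lam q'‖ ≤ ‖lam q‖)
    (hlam1 : ∀ q : Fin Q, (q : ℕ) = 0 → lam q = 1)
    (hP1 : ∀ q : Fin Q, (q : ℕ) = 0 → P q = Matrix.of fun _ _ => (M : ℂ)⁻¹)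
    (lam2 : ℝ) (hlam2 : lam2 = ‖lam ⟨1, hQ⟩‖) (hlam2lt : lam2 < 1)
    -- probability space carrying the minibatch randomness, the random iterates `W k`
    -- and the random stochastic subgradient matrices `G k`
    {Ω : Type*} [m0 : MeasurableSpace Ω] (μ : Measure Ω) [IsProbabilityMeasure μ]
    (W G : ℕ → Ω → Matrix (Fin n) (Fin M) ℝ)
    (hGmeas : ∀ k i j, Measurable fun ω => G k ω i j)
    -- constant learning rate and the decentralized update, with deterministic
    -- initialization `W0`
    (η : ℝ) (hη : 0 < η)
    (W0 : Matrix (Fin n) (Fin M) ℝ) (hW0 : ∀ ω, W 0 ω = W0)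
    (hupd : ∀ k ω, W (k + 1) ω = W k ω * A - η • G k ω)
    -- the energy constants `R_sp` and `E_sp`
    (Rsp Esp : ℝ) (hRsp : frobSq (ctr W0) ≤ Rsp)
    (hEsp : ∀ k, Integrable (fun ω => frobSq (ctr (G k ω))) μ ∧
      ∫ ω, frobSq (ctr (G k ω)) ∂μ ≤ Esp)
    -- bounds `e q` on the normalized fractions of energy of `ΔG(k)` in the eigenspaces,
    -- and the effective energy coefficient `α`
    (e : Fin Q → ℝ)
    (hesum : ∑ q ∈ Finset.univ.filter (fun q : Fin Q => (q : ℕ) ≠ 0), e q = 1)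
    (he : ∀ k, ∀ q : Fin Q, (q : ℕ) ≠ 0 →
      Integrable (fun ω => frobSqC ((ctr (G k ω)).map (fun x => (x : ℂ)) * P q)) μ ∧
      ∫ ω, frobSqC ((ctr (G k ω)).map (fun x => (x : ℂ)) * P q) ∂μ ≤ e q * Esp)
    (α : ℝ)
    (hα : α = if lam2 ≠ 0 then
        Real.sqrt (∑ q ∈ Finset.univ.filter (fun q : Fin Q => (q : ℕ) ≠ 0),
          e q * (‖lam q‖ / lam2) ^ 2)
      else 1)
    (hWint : ∀ k, Integrable (fun ω => frobNorm (ctr (W k ω))) μ)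
 :
    ∀ K : ℕ, 1 ≤ K →
      (1 / (K : ℝ)) * ∑ k ∈ Finset.range K, ∫ ω, frobNorm (ctr (W k ω)) ∂μ ≤
        (Real.sqrt M * Real.sqrt Rsp / K) * ((1 - lam2 ^ K) / (1 - lam2))
        + η * Real.sqrt Esp * (1 - α) * (((K : ℝ) - 1) / K)
        + (η * Real.sqrt Esp * α / (1 - lam2)) *
            (1 - (1 / (K : ℝ)) * ((1 - lam2 ^ K) / (1 - lam2))) := by
  -- basic positivity facts
  have hlam2nn : 0 ≤ lam2 := hlam2 ▸ norm_nonneg _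
  have hM1 : (1:ℝ) ≤ (M:ℝ) := by exact_mod_cast hM
  have hRsp0 : 0 ≤ Rsp := le_trans (frobSq_nonneg _) hRsp
  have hEsp0 : 0 ≤ Esp :=
    le_trans (integral_nonneg fun ω => frobSq_nonneg _) (hEsp 0).2
  have hα0 : 0 ≤ α := by
    rw [hα]; split
    · exact Real.sqrt_nonneg _
    · norm_num
  have h1l : (0:ℝ) < 1 - lam2 := by linarith
  have hlamle : ∀ q : Fin Q, (q : ℕ) ≠ 0 → ‖lam q‖ ≤ lam2 := by
    intro q hq
    rw [hlam2]
    exact hord ⟨1, hQ⟩ q (by rw [Fin.le_def]; simpa using Nat.one_le_iff_ne_zero.mpr hq)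
  have hGrows : ∀ k (ω : Ω) i, ∑ j, ctr (G k ω) i j = 0 := fun k ω => ctr_rowsum hM _
  have hWrows : ∀ i, ∑ j, ctr W0 i j = 0 := ctr_rowsum hM _
  -- pointwise spectral contraction
  have hfroble : ∀ (B : Matrix (Fin n) (Fin M) ℝ), (∀ i, ∑ j, B i j = 0) → ∀ m,
      frobSq (B * A ^ m) ≤ (lam2 ^ m) ^ 2 * frobSq B := by
    intro B hB m
    rw [specEq lam P A hQ hdecomp hherm hidem horth hPsum hP1 B hB m,
      sumP lam P A hQ hdecomp hherm hidem horth hPsum hP1 B hB, Finset.mul_sum]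
    refine Finset.sum_le_sum fun q hq => ?_
    have hqne := (Finset.mem_filter.mp hq).2
    have h1 : ‖lam q‖ ^ m ≤ lam2 ^ m :=
      pow_le_pow_left₀ (norm_nonneg _) (hlamle q hqne) m
    have h2 : (‖lam q‖ ^ m) ^ 2 ≤ (lam2 ^ m) ^ 2 :=
      pow_le_pow_left₀ (pow_nonneg (norm_nonneg _) m) h1 2
    exact mul_le_mul_of_nonneg_right h2 (frobSqC_nonneg _)
  -- measurability
  have measEntry : ∀ k m (i : Fin n) (j : Fin M),
      Measurable fun ω => (ctr (G k ω) * A ^ m : Matrix (Fin n) (Fin M) ℝ) i j := by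
    intro k m i j
    simp only [Matrix.mul_apply, ctr, Matrix.of_apply]
    apply Finset.measurable_sum
    intro l _
    exact ((hGmeas k i l).sub
      ((Finset.measurable_sum _ fun j' _ => hGmeas k i j').div_const _)).mul_const _
  have measSq : ∀ k m, Measurable fun ω => frobSq (ctr (G k ω) * A ^ m) := by
    intro k m
    unfold frobSq
    apply Finset.measurable_sum
    intro i _
    apply Finset.measurable_sum
    intro j _
    exact (measEntry k m i j).pow_const 2
  -- integrability
  have intSq : ∀ k m, Integrable (fun ω => frobSq (ctr (G k ω) * A ^ m)) μ := by
    intro k m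
    refine Integrable.mono' ((hEsp k).1.const_mul ((lam2 ^ m) ^ 2))
      (measSq k m).aestronglyMeasurable ?_
    filter_upwards with ω
    rw [Real.norm_eq_abs, abs_of_nonneg (frobSq_nonneg _)]
    exact hfroble _ (hGrows k ω) m
  have intNorm : ∀ k m,
      Integrable (fun ω => frobNorm (ctr (G k ω) * A ^ m)) μ := by
    intro k m
    show Integrable (fun ω => Real.sqrt (frobSq (ctr (G k ω) * A ^ m))) μ
    refine Integrable.mono' (((intSq k m).add (integrable_const 1)).div_const 2)
      (measSq k m).sqrt.aestronglyMeasurable ?_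
    filter_upwards with ω
    rw [Real.norm_eq_abs, abs_of_nonneg (Real.sqrt_nonneg _)]
    simp only [Pi.add_apply]
    have h2 := Real.sq_sqrt (frobSq_nonneg (ctr (G k ω) * A ^ m))
    have h4 := sq_nonneg (Real.sqrt (frobSq (ctr (G k ω) * A ^ m)) - 1)
    nlinarith
  -- expected spectral decomposition of the energy
  have EkEq : ∀ k m, ∫ ω, frobSq (ctr (G k ω) * A ^ m) ∂μ
      = ∑ q ∈ Finset.univ.filter (fun q : Fin Q => (q : ℕ) ≠ 0),
          (‖lam q‖ ^ m) ^ 2 * ∫ ω, frobSqC (Cof (ctr (G k ω)) * P q) ∂μ := by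
    intro k m
    calc ∫ ω, frobSq (ctr (G k ω) * A ^ m) ∂μ
        = ∫ ω, ∑ q ∈ Finset.univ.filter (fun q : Fin Q => (q : ℕ) ≠ 0),
            (‖lam q‖ ^ m) ^ 2 * frobSqC (Cof (ctr (G k ω)) * P q) ∂μ :=
          integral_congr_ae (Filter.Eventually.of_forall fun ω =>
            specEq lam P A hQ hdecomp hherm hidem horth hPsum hP1 _ (hGrows k ω) m)
      _ = ∑ q ∈ Finset.univ.filter (fun q : Fin Q => (q : ℕ) ≠ 0),
            ∫ ω, (‖lam q‖ ^ m) ^ 2 * frobSqC (Cof (ctr (G k ω)) * P q) ∂μ :=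
          integral_finset_sum _ fun q hq =>
            ((he k q (Finset.mem_filter.mp hq).2).1.const_mul _)
      _ = ∑ q ∈ Finset.univ.filter (fun q : Fin Q => (q : ℕ) ≠ 0),
            (‖lam q‖ ^ m) ^ 2 * ∫ ω, frobSqC (Cof (ctr (G k ω)) * P q) ∂μ :=
          Finset.sum_congr rfl fun q _ => integral_const_mul _ _
  have hIq0 : ∀ k (q : Fin Q), 0 ≤ ∫ ω, frobSqC (Cof (ctr (G k ω)) * P q) ∂μ :=
    fun k q => integral_nonneg fun ω => frobSqC_nonneg _
  -- key expectation bound for m ≥ 1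
  have Ebound : ∀ k m', ∫ ω, frobSq (ctr (G k ω) * A ^ (m' + 1)) ∂μ
      ≤ Esp * (α * lam2 ^ (m' + 1)) ^ 2 := by
    intro k m'
    rw [EkEq k (m' + 1)]
    have step1 : ∑ q ∈ Finset.univ.filter (fun q : Fin Q => (q : ℕ) ≠ 0),
        (‖lam q‖ ^ (m' + 1)) ^ 2 * ∫ ω, frobSqC (Cof (ctr (G k ω)) * P q) ∂μ
        ≤ ∑ q ∈ Finset.univ.filter (fun q : Fin Q => (q : ℕ) ≠ 0),
          (‖lam q‖ ^ (m' + 1)) ^ 2 * (e q * Esp) :=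
      Finset.sum_le_sum fun q hq => mul_le_mul_of_nonneg_left
        ((he k q (Finset.mem_filter.mp hq).2).2) (by positivity)
    refine step1.trans ?_
    by_cases hE0 : Esp = 0
    · simp [hE0]
    · have hEpos : 0 < Esp := lt_of_le_of_ne hEsp0 (Ne.symm hE0)
      have he0 : ∀ q ∈ Finset.univ.filter (fun q : Fin Q => (q : ℕ) ≠ 0), 0 ≤ e q := by
        intro q hq
        have h1 : (0:ℝ) ≤ e q * Esp :=
          le_trans (hIq0 k q) (he k q (Finset.mem_filter.mp hq).2).2
        exact nonneg_of_mul_nonneg_right (by rwa [mul_comm] at h1) hEpos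
      by_cases hl0 : lam2 = 0
      · have hz : ∀ q ∈ Finset.univ.filter (fun q : Fin Q => (q : ℕ) ≠ 0),
            (‖lam q‖ ^ (m' + 1)) ^ 2 * (e q * Esp) = 0 := by
          intro q hq
          have h1 := hlamle q (Finset.mem_filter.mp hq).2
          have h2 : ‖lam q‖ = 0 := le_antisymm (hl0 ▸ h1) (norm_nonneg _)
          simp [h2]
        rw [Finset.sum_eq_zero hz]
        positivity
      · have hlpos : 0 < lam2 := lt_of_le_of_ne hlam2nn (Ne.symm hl0)
        have hsum0 : 0 ≤ ∑ q ∈ Finset.univ.filter (fun q : Fin Q => (q : ℕ) ≠ 0),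
            e q * (‖lam q‖ / lam2) ^ 2 :=
          Finset.sum_nonneg fun q hq => mul_nonneg (he0 q hq) (sq_nonneg _)
        have hα2 : α ^ 2 = ∑ q ∈ Finset.univ.filter (fun q : Fin Q => (q : ℕ) ≠ 0),
            e q * (‖lam q‖ / lam2) ^ 2 := by
          rw [hα, if_pos hl0, Real.sq_sqrt hsum0]
        rw [mul_pow α (lam2 ^ (m' + 1)), ← mul_assoc, mul_comm Esp, mul_assoc, hα2,
          Finset.sum_mul]
        refine Finset.sum_le_sum fun q hq => ?_
        have hqle := hlamle q (Finset.mem_filter.mp hq).2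
        have h1 : ‖lam q‖ ^ m' ≤ lam2 ^ m' :=
          pow_le_pow_left₀ (norm_nonneg _) hqle m'
        have h2 : (‖lam q‖ ^ m') ^ 2 ≤ (lam2 ^ m') ^ 2 :=
          pow_le_pow_left₀ (pow_nonneg (norm_nonneg _) m') h1 2
        have expand : ∀ x : ℝ, (x ^ (m' + 1)) ^ 2 = x ^ 2 * (x ^ m') ^ 2 := by
          intro x; ring
        have hL : (‖lam q‖ ^ (m' + 1)) ^ 2 * (e q * Esp)
            = (e q * Esp * ‖lam q‖ ^ 2) * (‖lam q‖ ^ m') ^ 2 := by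
          rw [expand]; ring
        have hR : e q * (‖lam q‖ / lam2) ^ 2 * (Esp * (lam2 ^ (m' + 1)) ^ 2)
            = (e q * Esp * ‖lam q‖ ^ 2) * (lam2 ^ m') ^ 2 := by
          rw [expand, div_pow]
          field_simp
        rw [hL, hR]
        refine mul_le_mul_of_nonneg_left h2 ?_
        have := he0 q hq
        positivity

  -- the per-step noise bound constants
  set cc : ℕ → ℝ := fun m => Real.sqrt Esp * (if m = 0 then 1 else α * lam2 ^ m) with hcc
  have Gnb : ∀ k m, ∫ ω, frobNorm (ctr (G k ω) * A ^ m) ∂μ ≤ cc m := by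
    intro k m
    show ∫ ω, Real.sqrt (frobSq (ctr (G k ω) * A ^ m)) ∂μ ≤ cc m
    have hJ : ∫ ω, Real.sqrt (frobSq (ctr (G k ω) * A ^ m)) ∂μ
        ≤ Real.sqrt (∫ ω, frobSq (ctr (G k ω) * A ^ m) ∂μ) :=
      jensen_sqrt μ _ (fun ω => frobSq_nonneg _) (intSq k m) (intNorm k m)
    refine hJ.trans ?_
    cases m with
    | zero =>
      have hEq : (fun ω => frobSq (ctr (G k ω) * A ^ 0)) = fun ω => frobSq (ctr (G k ω)) := by
        funext ω; rw [pow_zero, Matrix.mul_one]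
      rw [hEq]
      refine (Real.sqrt_le_sqrt (hEsp k).2).trans ?_
      simp [hcc]
    | succ m' =>
      refine (Real.sqrt_le_sqrt (Ebound k m')).trans ?_
      rw [Real.sqrt_mul hEsp0, Real.sqrt_sq (by positivity)]
      simp [hcc]
  -- closed form for the consensus error
  have hclosed : ∀ k (ω : Ω), ctr (W k ω)
      = ctr W0 * A ^ k - η • ∑ j ∈ Finset.range k, ctr (G j ω) * A ^ (k - 1 - j) := by
    intro k
    induction k with
    | zero => intro ω; simp [hW0 ω]
    | succ k ih =>
      intro ω
      rw [hupd k ω, ctr_sub_smul, ctr_mul A hrows hcols, ih ω, Matrix.sub_mul,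
        Matrix.smul_mul, Matrix.sum_mul]
      have hs : ∀ j ∈ Finset.range k, (ctr (G j ω) * A ^ (k - 1 - j)) * A
          = ctr (G j ω) * A ^ (k - j) := by
        intro j hj
        have hj' := Finset.mem_range.mp hj
        rw [Matrix.mul_assoc, ← pow_succ, show k - 1 - j + 1 = k - j by omega]
      rw [Finset.sum_congr rfl hs, Matrix.mul_assoc (ctr W0) (A ^ k) A, ← pow_succ]
      rw [show k + 1 - 1 = k from rfl]
      rw [Finset.sum_range_succ, Nat.sub_self, pow_zero, Matrix.mul_one, smul_add, sub_sub]
  -- per-iteration bound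
  have perk : ∀ k, ∫ ω, frobNorm (ctr (W k ω)) ∂μ
      ≤ Real.sqrt Rsp * lam2 ^ k + η * ∑ m ∈ Finset.range k, cc m := by
    intro k
    have hpt : ∀ ω, frobNorm (ctr (W k ω)) ≤ frobNorm (ctr W0 * A ^ k)
        + η * ∑ j ∈ Finset.range k, frobNorm (ctr (G j ω) * A ^ (k - 1 - j)) := by
      intro ω
      rw [hclosed k ω]
      exact frobNorm_sub_sum_le _ η hη.le _ _
    have hint0 : Integrable
        (fun ω => ∑ j ∈ Finset.range k, frobNorm (ctr (G j ω) * A ^ (k - 1 - j))) μ :=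
      integrable_finset_sum _ fun j _ => intNorm j (k - 1 - j)
    have hint2 : Integrable (fun ω => frobNorm (ctr W0 * A ^ k)
        + η * ∑ j ∈ Finset.range k, frobNorm (ctr (G j ω) * A ^ (k - 1 - j))) μ :=
      (integrable_const _).add (hint0.const_mul η)
    calc ∫ ω, frobNorm (ctr (W k ω)) ∂μ
        ≤ ∫ ω, (frobNorm (ctr W0 * A ^ k)
            + η * ∑ j ∈ Finset.range k, frobNorm (ctr (G j ω) * A ^ (k - 1 - j))) ∂μ :=
          integral_mono (hWint k) hint2 hpt
      _ = frobNorm (ctr W0 * A ^ k)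
            + η * ∑ j ∈ Finset.range k, ∫ ω, frobNorm (ctr (G j ω) * A ^ (k - 1 - j)) ∂μ := by
          rw [integral_add (integrable_const _) (hint0.const_mul η), integral_const,
            integral_const_mul, integral_finset_sum _ (fun j _ => intNorm j (k - 1 - j))]
          simp
      _ ≤ Real.sqrt Rsp * lam2 ^ k + η * ∑ j ∈ Finset.range k, cc (k - 1 - j) := by
          refine add_le_add ?_ (mul_le_mul_of_nonneg_left
            (Finset.sum_le_sum fun j _ => Gnb j (k - 1 - j)) hη.le)
          have h1 : frobSq (ctr W0 * A ^ k) ≤ (lam2 ^ k) ^ 2 * Rsp :=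
            le_trans (hfroble _ hWrows k) (mul_le_mul_of_nonneg_left hRsp (sq_nonneg _))
          have h2 := frobNorm_le_sqrt h1
          rwa [Real.sqrt_mul (sq_nonneg _), Real.sqrt_sq (pow_nonneg hlam2nn k),
            mul_comm] at h2
      _ = Real.sqrt Rsp * lam2 ^ k + η * ∑ m ∈ Finset.range k, cc m := by
          rw [Finset.sum_range_reflect]
  -- partial sums of the noise constants
  have ccsum : ∀ k, ∑ m ∈ Finset.range (k + 1), cc m
      = Real.sqrt Esp * (1 - α) + Real.sqrt Esp * α * ∑ m ∈ Finset.range (k + 1), lam2 ^ m := by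
    intro k
    induction k with
    | zero => simp [hcc]; ring
    | succ k ih =>
      rw [Finset.sum_range_succ, ih, Finset.sum_range_succ (fun m => lam2 ^ m) (k + 1)]
      have hval : cc (k + 1) = Real.sqrt Esp * (α * lam2 ^ (k + 1)) := by
        rw [hcc]; simp
      rw [hval]
      ring
  -- final assembly
  intro K hK
  obtain ⟨K', rfl⟩ : ∃ K', K = K' + 1 := ⟨K - 1, by omega⟩
  have hcast : ((K' + 1 : ℕ) : ℝ) = (K' : ℝ) + 1 := by push_cast; ring
  rw [hcast]
  set S : ℝ := ∑ k ∈ Finset.range (K' + 1), lam2 ^ k with hSdef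
  have hSnn : 0 ≤ S := Finset.sum_nonneg fun k _ => pow_nonneg hlam2nn k
  have hS : (1 - lam2 ^ (K' + 1)) / (1 - lam2) = S := by
    rw [hSdef, geom_sum_eq (by linarith : lam2 ≠ 1)]
    rw [div_eq_div_iff (by linarith : (1:ℝ) - lam2 ≠ 0) (by linarith : lam2 - 1 ≠ 0)]
    ring
  rw [hS]
  set T : ℝ := ∑ i ∈ Finset.range K', ∑ m ∈ Finset.range (i + 1), lam2 ^ m with hTdef
  have hgeom : ∀ nn : ℕ, (1 - lam2) * ∑ m ∈ Finset.range nn, lam2 ^ m = 1 - lam2 ^ nn := by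
    intro nn
    linear_combination -geom_sum_mul lam2 nn
  have hS1 : S = (∑ i ∈ Finset.range K', lam2 ^ (i + 1)) + 1 := by
    rw [hSdef, Finset.sum_range_succ' (fun i => lam2 ^ i) K', pow_zero]
  have hT : (1 - lam2) * T = (K' : ℝ) + 1 - S := by
    rw [hTdef, Finset.mul_sum]
    rw [Finset.sum_congr rfl fun i (_ : i ∈ Finset.range K') => hgeom (i + 1)]
    rw [Finset.sum_sub_distrib, Finset.sum_const, Finset.card_range, nsmul_eq_mul, mul_one, hS1]
    ring
  have hDsum : ∑ k ∈ Finset.range (K' + 1), (∑ m ∈ Finset.range k, cc m)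
      = Real.sqrt Esp * (1 - α) * K' + Real.sqrt Esp * α * T := by
    rw [Finset.sum_range_succ' (fun k => ∑ m ∈ Finset.range k, cc m) K']
    simp only [Finset.range_zero, Finset.sum_empty, add_zero]
    rw [Finset.sum_congr rfl fun i (_ : i ∈ Finset.range K') => ccsum i]
    rw [Finset.sum_add_distrib, Finset.sum_const, Finset.card_range, nsmul_eq_mul,
      ← Finset.mul_sum, ← hTdef]
    ring
  have main : ∑ k ∈ Finset.range (K' + 1), ∫ ω, frobNorm (ctr (W k ω)) ∂μ
      ≤ Real.sqrt Rsp * S + η * Real.sqrt Esp * (1 - α) * K' + η * Real.sqrt Esp * α * T := by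
    calc ∑ k ∈ Finset.range (K' + 1), ∫ ω, frobNorm (ctr (W k ω)) ∂μ
        ≤ ∑ k ∈ Finset.range (K' + 1),
            (Real.sqrt Rsp * lam2 ^ k + η * ∑ m ∈ Finset.range k, cc m) :=
          Finset.sum_le_sum fun k _ => perk k
      _ = Real.sqrt Rsp * S
            + η * ∑ k ∈ Finset.range (K' + 1), ∑ m ∈ Finset.range k, cc m := by
          rw [Finset.sum_add_distrib, ← Finset.mul_sum, ← Finset.mul_sum, ← hSdef]
      _ = _ := by rw [hDsum]; ring
  have hKpos : (0:ℝ) < (K' : ℝ) + 1 := by positivity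
  have hKS : (K' : ℝ) + 1 - S = (1 - lam2) * T := by linarith [hT]
  have h1M : (1:ℝ) ≤ Real.sqrt (M : ℝ) := by
    rw [show (1:ℝ) = Real.sqrt 1 by simp]
    exact Real.sqrt_le_sqrt hM1
  have hRHS : Real.sqrt (M : ℝ) * Real.sqrt Rsp / ((K' : ℝ) + 1) * S
      + η * Real.sqrt Esp * (1 - α) * ((((K' : ℝ) + 1) - 1) / ((K' : ℝ) + 1))
      + η * Real.sqrt Esp * α / (1 - lam2) * (1 - 1 / ((K' : ℝ) + 1) * S)
      = (Real.sqrt (M : ℝ) * Real.sqrt Rsp * S + η * Real.sqrt Esp * (1 - α) * K'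
          + η * Real.sqrt Esp * α * T) / ((K' : ℝ) + 1) := by
    have h1 : (1:ℝ) - 1 / ((K' : ℝ) + 1) * S = (((K' : ℝ) + 1) - S) / ((K' : ℝ) + 1) := by
      field_simp
    rw [h1, hKS]
    field_simp
    ring
  rw [hRHS, one_div, inv_mul_eq_div]
  refine div_le_div_of_nonneg_right ?_ hKpos.le |>.trans_eq rfl
  calc ∑ k ∈ Finset.range (K' + 1), ∫ ω, frobNorm (ctr (W k ω)) ∂μ
      ≤ Real.sqrt Rsp * S + η * Real.sqrt Esp * (1 - α) * K' + η * Real.sqrt Esp * α * T :=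
        main
    _ ≤ Real.sqrt (M : ℝ) * Real.sqrt Rsp * S + η * Real.sqrt Esp * (1 - α) * K'
          + η * Real.sqrt Esp * α * T := by
        nlinarith [mul_nonneg (mul_nonneg (sub_nonneg.mpr h1M) (Real.sqrt_nonneg Rsp)) hSnn]

end
end
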